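/- For every b > 0, the expression D(k) := -2·(2(E(k) - K(k)) + k²·K(k)) / (π b k √(1-k²) (1 + √(1-k²))), which equals ∂_k κ^{b,k} for k ∈ (0,1), tends to 0 as k → 0 from the right: lim_{k→0⁺} D(k) = 0. -/

import Mathlib

open Real Filter

/-- Complete elliptic integral of the first kind. -/
noncomputable def ellK (k : ℝ) : ℝ :=
  ∫ u in (0:ℝ)..(π/2), 1 / Real.sqrt (1 - k^2 * Real.sin u ^ 2)

/-- Complete elliptic integral of the second kind. -/
noncomputable def ellE (k : ℝ) : ℝ :=
  ∫ u in (0:ℝ)..(π/2), Real.sqrt (1 - k^2 * Real.sin u ^ 2)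

lemma aux_pos {k : ℝ} (hk : k ∈ Set.Ioo (0:ℝ) 1) (u : ℝ) :
    0 < 1 - k^2 * Real.sin u ^ 2 := by
  obtain ⟨h0, h1⟩ := hk
  nlinarith [Real.sin_sq_le_one u, sq_nonneg (Real.sin u), sq_nonneg k]

lemma num_eq {k : ℝ} (hk : k ∈ Set.Ioo (0:ℝ) 1) :
    2 * (ellE k - ellK k) + k^2 * ellK k =
      ∫ u in (0:ℝ)..(π/2),
        k^2 * (1 - 2 * Real.sin u ^ 2) / Real.sqrt (1 - k^2 * Real.sin u ^ 2) := by
  have hX := aux_pos hk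
  have hs : ∀ u : ℝ, Real.sqrt (1 - k^2 * Real.sin u ^ 2) ≠ 0 := fun u =>
    ne_of_gt (Real.sqrt_pos.mpr (hX u))
  have hc1 : Continuous fun u : ℝ => Real.sqrt (1 - k^2 * Real.sin u ^ 2) := by
    fun_prop
  have hc2 : Continuous fun u : ℝ => 1 / Real.sqrt (1 - k^2 * Real.sin u ^ 2) :=
    continuous_const.div hc1 hs
  have hE : IntervalIntegrable (fun u : ℝ => Real.sqrt (1 - k^2 * Real.sin u ^ 2))
      MeasureTheory.volume 0 (π/2) := hc1.intervalIntegrable _ _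
  have hK : IntervalIntegrable (fun u : ℝ => 1 / Real.sqrt (1 - k^2 * Real.sin u ^ 2))
      MeasureTheory.volume 0 (π/2) := hc2.intervalIntegrable _ _
  have step : 2 * (ellE k - ellK k) + k^2 * ellK k =
      ∫ u in (0:ℝ)..(π/2),
        (2 * (Real.sqrt (1 - k^2 * Real.sin u ^ 2)
            - 1 / Real.sqrt (1 - k^2 * Real.sin u ^ 2))
          + k^2 * (1 / Real.sqrt (1 - k^2 * Real.sin u ^ 2))) := by
    rw [intervalIntegral.integral_add (((hE.sub hK).const_mul 2)) (hK.const_mul (k^2)),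
      intervalIntegral.integral_const_mul, intervalIntegral.integral_const_mul,
      intervalIntegral.integral_sub hE hK]
    unfold ellE ellK
    ring
  rw [step]
  apply intervalIntegral.integral_congr
  intro u _
  have h2 : Real.sqrt (1 - k^2 * Real.sin u ^ 2) ^ 2 = 1 - k^2 * Real.sin u ^ 2 :=
    Real.sq_sqrt (le_of_lt (hX u))
  field_simp [hs u]
  nlinarith [h2, Real.sqrt_pos.mpr (hX u)]

theorem stmt_18 (b : ℝ) (hb : 0 < b) :
    Tendsto
      (fun k : ℝ =>
        -2 * (2 * (ellE k - ellK k) + k^2 * ellK k) /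
          (π * b * k * Real.sqrt (1 - k^2) * (1 + Real.sqrt (1 - k^2))))
      (nhdsWithin 0 (Set.Ioi 0)) (nhds 0) := by
  have hπ : (0:ℝ) < π := Real.pi_pos
  -- bounding function
  set g : ℝ → ℝ := fun k => k / (b * (1 - k^2)) with hg
  have hgt : Tendsto g (nhdsWithin 0 (Set.Ioi 0)) (nhds 0) := by
    have : Tendsto g (nhds 0) (nhds (0 / (b * (1 - 0^2)))) := by
      apply Tendsto.div tendsto_id
      · exact (tendsto_const_nhds.mul ((tendsto_const_nhds.sub ((tendsto_id).pow 2))))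
      · simp [ne_of_gt hb]
    simpa using this.mono_left nhdsWithin_le_nhds
  apply squeeze_zero_norm' _ hgt
  filter_upwards [Ioo_mem_nhdsGT_of_mem (by norm_num : (0:ℝ) ∈ Set.Ico (0:ℝ) 1)]
    with k hk
  obtain ⟨hk0, hk1⟩ := hk
  have hkmem : k ∈ Set.Ioo (0:ℝ) 1 := ⟨hk0, hk1⟩
  have hs2 : (0:ℝ) < 1 - k^2 := by nlinarith
  have hs : 0 < Real.sqrt (1 - k^2) := Real.sqrt_pos.mpr hs2
  have hssq : Real.sqrt (1 - k^2) ^ 2 = 1 - k^2 := Real.sq_sqrt (le_of_lt hs2)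
  have hsle1 : Real.sqrt (1 - k^2) ≤ 1 := Real.sqrt_le_one.mpr (by nlinarith)
  have hD : 0 < π * b * k * Real.sqrt (1 - k^2) * (1 + Real.sqrt (1 - k^2)) := by
    positivity
  -- bound the numerator integral
  have hnum : |2 * (ellE k - ellK k) + k^2 * ellK k| ≤ k^2 * π / (2 * Real.sqrt (1 - k^2)) := by
    rw [num_eq hkmem]
    have hb1 : |∫ u in (0:ℝ)..(π/2),
        k^2 * (1 - 2 * Real.sin u ^ 2) / Real.sqrt (1 - k^2 * Real.sin u ^ 2)| ≤
        (k^2 / Real.sqrt (1 - k^2)) * |π/2 - 0| := by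
      rw [← Real.norm_eq_abs]
      apply intervalIntegral.norm_integral_le_of_norm_le_const
      intro u _
      have hXu := aux_pos hkmem u
      have hsu : 0 < Real.sqrt (1 - k^2 * Real.sin u ^ 2) := Real.sqrt_pos.mpr hXu
      have hge : Real.sqrt (1 - k^2) ≤ Real.sqrt (1 - k^2 * Real.sin u ^ 2) := by
        apply Real.sqrt_le_sqrt
        nlinarith [Real.sin_sq_le_one u, sq_nonneg k]
      rw [Real.norm_eq_abs, abs_div]
      rw [abs_of_pos hsu]
      apply div_le_div₀ (by positivity) _ hs hge
      rw [abs_mul, abs_of_nonneg (sq_nonneg k)]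
      have : |1 - 2 * Real.sin u ^ 2| ≤ 1 := by
        rw [abs_le]
        constructor <;> nlinarith [Real.sin_sq_le_one u, sq_nonneg (Real.sin u)]
      nlinarith [sq_nonneg k]
    calc _ ≤ (k^2 / Real.sqrt (1 - k^2)) * |π/2 - 0| := hb1
      _ = k^2 * π / (2 * Real.sqrt (1 - k^2)) := by
          rw [show |π/2 - 0| = π/2 by rw [sub_zero]; exact abs_of_pos (by positivity)]; ring
  -- conclude
  rw [Real.norm_eq_abs, abs_div, abs_of_pos hD,
    div_le_iff₀ hD]
  have h1 : |(-2) * (2 * (ellE k - ellK k) + k^2 * ellK k)| ≤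
      k^2 * π / Real.sqrt (1 - k^2) := by
    rw [abs_mul]
    calc |(-2:ℝ)| * |2 * (ellE k - ellK k) + k^2 * ellK k|
        ≤ 2 * (k^2 * π / (2 * Real.sqrt (1 - k^2))) := by
          rw [abs_neg, abs_two]; linarith [hnum]
      _ = k^2 * π / Real.sqrt (1 - k^2) := by field_simp
  refine h1.trans ?_
  have hgD : g k * (π * b * k * Real.sqrt (1 - k^2) * (1 + Real.sqrt (1 - k^2))) =
      k^2 * π * (1 + Real.sqrt (1 - k^2)) / Real.sqrt (1 - k^2) := by
    rw [hg]
    field_simp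
    linear_combination hssq
  rw [hgD]
  have hnn : k^2*π ≤ k^2*π*(1+Real.sqrt (1-k^2)) := by nlinarith [mul_nonneg (mul_nonneg (sq_nonneg k) hπ.le) (Real.sqrt_nonneg (1-k^2))]
  exact (div_le_div_iff_of_pos_right hs).mpr hnn
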